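/- Let n ≥ 2 and 0 ≤ δ < 1/n, and set β = (nδ² − 2δ − 1)/(nδ² − 2δ + n). Then β ≤ −1/n and β > −1/(n−1); moreover β is strictly decreasing as a function of δ on [0, 1/n). -/
import Mathlib


theorem beta_bounds_and_decreasing (n : ℕ) (hn : 2 ≤ n) (δ : ℝ)
    (hδ0 : 0 ≤ δ) (hδ1 : δ < 1 / n) :
    ((n : ℝ) * δ ^ 2 - 2 * δ - 1) / ((n : ℝ) * δ ^ 2 - 2 * δ + n) ≤ -(1 / n) ∧
    -(1 / ((n : ℝ) - 1)) <
      ((n : ℝ) * δ ^ 2 - 2 * δ - 1) / ((n : ℝ) * δ ^ 2 - 2 * δ + n) ∧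
    StrictAntiOn (fun t : ℝ => ((n : ℝ) * t ^ 2 - 2 * t - 1) / ((n : ℝ) * t ^ 2 - 2 * t + n))
      (Set.Ico 0 (1 / n)) := by
  have hn2 : (2 : ℝ) ≤ n := by exact_mod_cast hn
  have hnpos : (0 : ℝ) < n := by linarith
  have hδn : δ * n < 1 := (lt_div_iff₀ hnpos).mp hδ1
  have hden : ∀ t : ℝ, 0 ≤ t → t * n < 1 →
      0 < (n : ℝ) * t ^ 2 - 2 * t + n := by
    intro t ht0 htn
    nlinarith [sq_nonneg t, mul_nonneg ht0 ht0]
  have hD := hden δ hδ0 hδn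
  refine ⟨?_, ?_, ?_⟩
  · rw [show -(1 / (n : ℝ)) = (-1) / n by ring, div_le_div_iff₀ hD hnpos]
    nlinarith [mul_nonneg hδ0 (by linarith : (0:ℝ) ≤ 2 - δ * n)]
  · have hn1 : (0 : ℝ) < (n : ℝ) - 1 := by linarith
    rw [show -(1 / ((n : ℝ) - 1)) = (-1) / ((n : ℝ) - 1) by ring,
      div_lt_div_iff₀ hn1 hD]
    nlinarith [mul_pos (by linarith : (0:ℝ) < 1 - δ * n) (by linarith : (0:ℝ) < 1 - δ * n)]
  · intro u hu v hv huv
    obtain ⟨hu0, hu1⟩ := hu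
    obtain ⟨hv0, hv1⟩ := hv
    have hun : u * n < 1 := (lt_div_iff₀ hnpos).mp hu1
    have hvn : v * n < 1 := (lt_div_iff₀ hnpos).mp hv1
    have hDu := hden u hu0 hun
    have hDv := hden v hv0 hvn
    simp only
    rw [div_lt_div_iff₀ hDv hDu]
    nlinarith [mul_pos (by linarith : (0:ℝ) < v - u)
      (by linarith : (0:ℝ) < 2 - (u + v) * n), hn2]
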